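/- Let K be a class of finite simple graphs with bounded expansion, witnessed by constants c_1, c_2, … with wcol_k(G) ≤ c_k for all k and all G ∈ K, and let p be an odd positive integer. Then every graph G ∈ K with odd girth at least p+1 satisfies χ(G^[♯p]) ≤ (⌊p/2⌋+2)^{c_p}; in particular there is a constant M = M(K,p) such that χ(G^[♯p]) ≤ M for all such G. -/

import Mathlib

open SimpleGraph

variable {V : Type*}

/-- The exact `p`-power graph: distinct vertices adjacent iff joined by a path of length exactly `p`. -/
def exactPowerGraph (G : SimpleGraph V) (p : ℕ) : SimpleGraph V where
  Adj x y := x ≠ y ∧ ∃ w : G.Walk x y, w.IsPath ∧ w.length = p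
  symm := by
    constructor
    rintro x y ⟨h1, w, hw, hl⟩
    exact ⟨h1.symm, w.reverse, hw.reverse, by simpa using hl⟩
  loopless := by constructor; rintro x ⟨h1, -⟩; exact h1 rfl

/-- `x` is weakly `k`-accessible from `y` w.r.t. the linear order `L`. -/
def WeaklyAccessible (G : SimpleGraph V) (L : LinearOrder V) (k : ℕ) (x y : V) : Prop :=
  L.lt x y ∧ ∃ w : G.Walk x y, w.IsPath ∧ w.length ≤ k ∧
    ∀ z ∈ w.support, z ≠ x → z ≠ y → L.lt x z

/-- The weak `k`-colouring number. -/
noncomputable def wcol (G : SimpleGraph V) (k : ℕ) : ℕ :=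
  1 + sInf { m : ℕ | ∃ L : LinearOrder V, ∀ y : V,
      {x : V | WeaklyAccessible G L k x y}.ncard ≤ m }

/-- `G` has odd girth at least `m`: no odd cycle of length less than `m`. -/
def OddGirthAtLeast (G : SimpleGraph V) (m : ℕ) : Prop :=
  ∀ (v : V) (c : G.Walk v v), c.IsCycle → Odd c.length → m ≤ c.length

section AuxWalk

variable {G : SimpleGraph V}

lemma aux_path_loop {v : V} (Q : G.Walk v v) (h : Q.IsPath) : Q.length = 0 := by
  cases Q with
  | nil => rfl
  | @cons _ b _ hadj Q' =>
    exfalso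
    have hmem : v ∈ Q'.support := Q'.end_mem_support
    have hnd := h.support_nodup
    rw [Walk.support_cons, List.nodup_cons] at hnd
    exact hnd.1 hmem

lemma aux_edge_end {x v : V} (P : G.Walk x v) (hp : P.IsPath) (he : s(v, x) ∈ P.edges) :
    P.length = 1 := by
  induction P with
  | nil => simp at he
  | @cons a b c h Q ih =>
    rw [Walk.edges_cons, List.mem_cons] at he
    rcases he with he | he
    · rcases Sym2.eq_iff.mp he with ⟨h1, h2⟩ | ⟨h1, h2⟩
      · exact absurd h2 h.ne
      · subst h1
        have := aux_path_loop Q hp.of_cons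
        simp [this]
    · exfalso
      have ha : a ∈ Q.support := Q.snd_mem_support_of_mem_edges he
      have hnd := hp.support_nodup
      rw [Walk.support_cons, List.nodup_cons] at hnd
      exact hnd.1 ha

lemma aux_split_closed [DecidableEq V] {w v : V} (T : G.Walk w v) (hw : w ∈ T.support.tail) :
    ∃ (C : G.Walk w w) (Tr : G.Walk w v), 1 ≤ C.length ∧ C.length + Tr.length = T.length := by
  cases T with
  | nil => simp at hw
  | @cons _ x _ h T₃ =>
    have hx : w ∈ T₃.support := by simpa using hw
    refine ⟨Walk.cons h (T₃.takeUntil w hx), T₃.dropUntil w hx, by simp, ?_⟩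
    have := congrArg Walk.length (T₃.take_spec hx)
    rw [Walk.length_append] at this
    simp only [Walk.length_cons]
    omega

lemma aux_exists_odd_cycle [DecidableEq V] :
    ∀ (n : ℕ) {v : V} (W : G.Walk v v), Odd W.length → W.length ≤ n →
      ∃ (u : V) (C : G.Walk u u), C.IsCycle ∧ Odd C.length ∧ C.length ≤ W.length := by
  intro n
  induction n with
  | zero =>
    intro v W hodd hle
    rw [Nat.le_zero] at hle
    rw [hle] at hodd
    simp [Nat.odd_iff] at hodd
  | succ n ih =>
    intro v W hodd hle
    cases W with
    | nil => simp [Nat.odd_iff] at hodd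
    | @cons _ x _ h W' =>
      by_cases hnd : W'.support.Nodup
      · have hW'path : W'.IsPath := (Walk.isPath_def W').mpr hnd
        by_cases he : s(v, x) ∈ W'.edges
        · exfalso
          have h1 := aux_edge_end W' hW'path he
          rw [Walk.length_cons, h1] at hodd
          simp [Nat.odd_iff] at hodd
        · exact ⟨v, Walk.cons h W', (Walk.cons_isCycle_iff W' h).mpr ⟨hW'path, he⟩, hodd, le_rfl⟩
      · obtain ⟨w, hw⟩ := List.exists_duplicate_iff_not_nodup.mpr hnd
        have hwmem : w ∈ W'.support := hw.mem
        have hcount : 2 ≤ W'.support.count w := List.duplicate_iff_two_le_count.mp hw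
        have hspec := W'.take_spec hwmem
        have hc1 : (W'.takeUntil w hwmem).support.count w = 1 :=
          W'.count_support_takeUntil_eq_one hwmem
        have hlensum : (W'.takeUntil w hwmem).length + (W'.dropUntil w hwmem).length
            = W'.length := by
          have := congrArg Walk.length hspec
          rwa [Walk.length_append] at this
        have htail : w ∈ (W'.dropUntil w hwmem).support.tail := by
          have hsupp := congrArg Walk.support hspec
          rw [Walk.support_append] at hsupp
          have hcc : 1 ≤ ((W'.dropUntil w hwmem).support.tail).count w := by
            have := hcount
            rw [← hsupp, List.count_append, hc1] at this
            omega
          exact List.count_pos_iff.mp (by omega)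
        obtain ⟨C₀, Tr, hC₀pos, hsum⟩ := aux_split_closed (W'.dropUntil w hwmem) htail
        have e1 : (Walk.cons h W').length = W'.length + 1 := by simp
        set Wnew : G.Walk v v := Walk.cons h ((W'.takeUntil w hwmem).append Tr) with hWnew
        have hWnewlen : Wnew.length = 1 + (W'.takeUntil w hwmem).length + Tr.length := by
          rw [hWnew, Walk.length_cons, Walk.length_append]; omega
        have htot : C₀.length + Wnew.length = (Walk.cons h W').length := by
          rw [e1]; omega
        have hWnewpos : 1 ≤ Wnew.length := by omega
        rcases Nat.even_or_odd C₀.length with hE | hO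
        · have hoddnew : Odd Wnew.length := by
            obtain ⟨k, hk⟩ := hE
            obtain ⟨k2, hk2⟩ := hodd
            exact ⟨k2 - k, by omega⟩
          obtain ⟨u, C, hC, hCo, hCl⟩ := ih Wnew hoddnew (by omega)
          exact ⟨u, C, hC, hCo, by omega⟩
        · obtain ⟨u, C, hC, hCo, hCl⟩ := ih C₀ hO (by omega)
          refine ⟨u, C, hC, hCo, by omega⟩

end AuxWalk


/-- Greedy colouring lemma. -/
lemma aux_greedy [Fintype V] [LinearOrder V] {t : ℕ} (R : V → V → Prop)
    (hR : ∀ u v, R u v → u < v) (hcard : ∀ v, {u | R u v}.ncard ≤ t - 1) (ht : 1 ≤ t) :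
    ∃ s : V → Fin t, ∀ u v, R u v → s u ≠ s v := by
  classical
  have key : ∀ (nn : ℕ) (F : Finset V), F.card ≤ nn →
      ∃ s : V → Fin t, ∀ v ∈ F, ∀ u, R u v → s u ≠ s v := by
    intro nn
    induction nn with
    | zero =>
      intro F hF
      have : F = ∅ := Finset.card_eq_zero.mp (Nat.le_zero.mp hF)
      subst this
      exact ⟨fun _ => ⟨0, ht⟩, by simp⟩
    | succ nn ih =>
      intro F hF
      rcases F.eq_empty_or_nonempty with rfl | hFne
      · exact ⟨fun _ => ⟨0, ht⟩, by simp⟩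
      · set M := F.max' hFne with hM
        obtain ⟨s, hs⟩ := ih (F.erase M) (by
          have hM1 : (F.erase M).card = F.card - 1 :=
            Finset.card_erase_of_mem (F.max'_mem hFne)
          have hM2 : 1 ≤ F.card := Finset.card_pos.mpr hFne
          omega)
        set NB : Finset V := Finset.univ.filter (fun u => R u M) with hNB
        have hNBcard : NB.card ≤ t - 1 := by
          have hcoe : ((NB : Finset V) : Set V) = {u | R u M} := by
            ext u; simp [hNB]
          have := hcard M
          rw [← hcoe, Set.ncard_coe_finset] at this
          exact this
        have himg : (NB.image s).card < t := by
          have := Finset.card_image_le (s := NB) (f := s)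
          omega
        obtain ⟨col, hcol⟩ : ∃ col : Fin t, col ∉ NB.image s := by
          by_contra hcon
          push_neg at hcon
          have hsub : (Finset.univ : Finset (Fin t)) ⊆ NB.image s := fun c _ => hcon c
          have := Finset.card_le_card hsub
          simp only [Finset.card_univ, Fintype.card_fin] at this
          omega
        refine ⟨Function.update s M col, ?_⟩
        intro v hv u huv
        by_cases hvM : v = M
        · have hultM : u < v := hR u v huv
          have huM : u ≠ M := by rw [← hvM]; exact ne_of_lt hultM
          rw [hvM, Function.update_of_ne huM, Function.update_self]
          intro hh
          refine hcol (hh ▸ Finset.mem_image_of_mem s ?_)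
          simp only [hNB, Finset.mem_filter, Finset.mem_univ, true_and]
          exact hvM ▸ huv
        · have hvF : v ∈ F.erase M := Finset.mem_erase.mpr ⟨hvM, hv⟩
          have hvle : v ≤ M := F.le_max' v hv
          have huM : u ≠ M := fun hh => by
            have := hR u v huv
            rw [hh] at this
            exact absurd (lt_of_lt_of_le this hvle) (lt_irrefl _)
          rw [Function.update_of_ne huM, Function.update_of_ne hvM]
          exact hs v hvF u huv
  obtain ⟨s, hs⟩ := key (Finset.univ.card) Finset.univ le_rfl
  exact ⟨s, fun u v h => hs v (Finset.mem_univ v) u h⟩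




section Core

variable (G : SimpleGraph V) (L : LinearOrder V) (p : ℕ)

/-- Lengths of admissible paths from `u` to `v`. -/
def ASet (u v : V) : Set ℕ :=
  {ℓ | ∃ w : G.Walk u v, w.IsPath ∧ w.length ≤ p ∧
    (∀ z ∈ w.support, z ≠ u → z ≠ v → L.lt u z) ∧ w.length = ℓ}

/-- Minimum admissible path length. -/
noncomputable def DD (u v : V) : ℕ := sInf (ASet G L p u v)

variable {G L p}

lemma ASet_nonempty {u v : V} (h : WeaklyAccessible G L p u v) : (ASet G L p u v).Nonempty := by
  obtain ⟨h1, w, h2, h3, h4⟩ := h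
  exact ⟨w.length, w, h2, h3, h4, rfl⟩

lemma DD_mem {u v : V} (h : WeaklyAccessible G L p u v) : DD G L p u v ∈ ASet G L p u v :=
  Nat.sInf_mem (ASet_nonempty h)

lemma DD_le {u v : V} (w : G.Walk u v) (h1 : w.IsPath) (h2 : w.length ≤ p)
    (h3 : ∀ z ∈ w.support, z ≠ u → z ≠ v → L.lt u z) : DD G L p u v ≤ w.length :=
  Nat.sInf_le ⟨w, h1, h2, h3, rfl⟩

lemma DD_pos {u v : V} (h : WeaklyAccessible G L p u v) : 1 ≤ DD G L p u v := by
  obtain ⟨w, -, -, -, hlen⟩ := DD_mem h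
  rcases Nat.eq_zero_or_pos (DD G L p u v) with h0 | h1
  · exfalso
    have := Walk.eq_of_length_eq_zero (by rw [hlen, h0])
    subst this
    exact absurd h.1 (by letI := L; exact lt_irrefl u)
  · exact h1

/-- Join lemma: two accessible vertices with short admissible paths are mutually accessible. -/
lemma wa_join {u w x : V} (hlt : L.lt u w) (h1 : WeaklyAccessible G L p u x)
    (h2 : WeaklyAccessible G L p w x) (hsum : DD G L p u x + DD G L p w x ≤ p) :
    WeaklyAccessible G L p u w := by
  letI := L
  obtain ⟨P1, hP1path, hP1le, hP1cond, hP1len⟩ := DD_mem h1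
  obtain ⟨P2, hP2path, hP2le, hP2cond, hP2len⟩ := DD_mem h2
  refine ⟨hlt, (P1.append P2.reverse).bypass, Walk.bypass_isPath _, ?_, ?_⟩
  · calc (P1.append P2.reverse).bypass.length ≤ (P1.append P2.reverse).length :=
        Walk.length_bypass_le _
    _ = P1.length + P2.length := by rw [Walk.length_append, Walk.length_reverse]
    _ ≤ p := by omega
  · intro z hz hzu hzw
    have hz' : z ∈ (P1.append P2.reverse).support := Walk.support_bypass_subset _ hz
    rw [Walk.mem_support_append_iff] at hz'
    rcases hz' with hz1 | hz2
    · by_cases hzx : z = x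
      · exact hzx ▸ h1.1
      · exact hP1cond z hz1 hzu hzx
    · rw [Walk.support_reverse, List.mem_reverse] at hz2
      by_cases hzx : z = x
      · exact hzx ▸ h1.1
      · exact lt_trans hlt (hP2cond z hz2 hzw hzx)

variable (G L p) in
/-- The colouring function. -/
noncomputable def Phi (m : ℕ) {t : ℕ} (s : V → Fin t) (v : V) (j : Fin t) : ℕ :=
  sInf {e | ∃ u, WeaklyAccessible G L p u v ∧ s u = j ∧ e = min (DD G L p u v) (m + 1)}

lemma Phi_lt (m : ℕ) {t : ℕ} (s : V → Fin t) (v : V) (j : Fin t) :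
    Phi G L p m s v j < m + 2 := by
  rw [Phi]
  rcases Set.eq_empty_or_nonempty
      {e | ∃ u, WeaklyAccessible G L p u v ∧ s u = j ∧ e = min (DD G L p u v) (m + 1)} with
    he | hne
  · rw [he, Nat.sInf_empty]; omega
  · obtain ⟨u, -, -, hval⟩ := Nat.sInf_mem hne
    rw [hval]
    have := min_le_right (DD G L p u v) (m + 1)
    omega

end Core

section KeyLemmas

variable {G : SimpleGraph V} {L : LinearOrder V} {p m : ℕ} {t : ℕ} {s : V → Fin t}

/-- Case: one endpoint of the path is the minimum. -/
lemma Phi_ne_end (hs : ∀ u v, WeaklyAccessible G L p u v → s u ≠ s v)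
    {x y : V} (P : G.Walk x y) (hPp : P.IsPath) (hPlen : P.length = p)
    (hmin : ∀ w ∈ P.support, L.le x w) (hxy : x ≠ y) :
    Phi G L p m s x ≠ Phi G L p m s y := by
  letI := L
  intro hPhi
  have hxy' : x < y := lt_of_le_of_ne (hmin y P.end_mem_support) hxy
  have hWAxy : WeaklyAccessible G L p x y :=
    ⟨hxy', P, hPp, le_of_eq hPlen,
      fun z hz hzx _ => lt_of_le_of_ne (hmin z hz) (Ne.symm hzx)⟩
  have h0 : Phi G L p m s x (s x) = 0 := by
    rw [Phi]
    have hempty : {e : ℕ | ∃ u, WeaklyAccessible G L p u x ∧ s u = s x ∧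
        e = min (DD G L p u x) (m + 1)} = ∅ := by
      ext e
      simp only [Set.mem_setOf_eq, Set.mem_empty_iff_false, iff_false]
      rintro ⟨u, hu, hsu, -⟩
      exact hs u x hu hsu
    rw [hempty, Nat.sInf_empty]
  have h1 : 1 ≤ Phi G L p m s y (s x) := by
    rw [Phi]
    have hne : {e : ℕ | ∃ u, WeaklyAccessible G L p u y ∧ s u = s x ∧
        e = min (DD G L p u y) (m + 1)}.Nonempty :=
      ⟨min (DD G L p x y) (m + 1), x, hWAxy, rfl, rfl⟩
    obtain ⟨u, hu, -, hval⟩ := Nat.sInf_mem hne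
    rw [hval]
    exact le_min (DD_pos hu) (by omega)
  rw [hPhi] at h0
  omega

/-- Case: the minimum of the path is interior. -/
lemma Phi_ne_mid [DecidableEq V] (hgirth : OddGirthAtLeast G (p + 1)) (hpm : p = 2 * m + 1)
    (hs : ∀ u v, WeaklyAccessible G L p u v → s u ≠ s v)
    {x y z : V} (Sx : G.Walk z x) (Sy : G.Walk z y)
    (hSxp : Sx.IsPath) (hSyp : Sy.IsPath)
    (hminx : ∀ w ∈ Sx.support, L.le z w) (hminy : ∀ w ∈ Sy.support, L.le z w)
    (hzx : z ≠ x) (hzy : z ≠ y)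
    (hab : Sx.length < Sy.length) (habp : Sx.length + Sy.length = p) :
    Phi G L p m s x ≠ Phi G L p m s y := by
  letI := L
  intro hPhi
  set a := Sx.length with ha
  set b := Sy.length with hb
  have hzx' : z < x := lt_of_le_of_ne (hminx x Sx.end_mem_support) hzx
  have hzy' : z < y := lt_of_le_of_ne (hminy y Sy.end_mem_support) hzy
  have hcondx : ∀ w ∈ Sx.support, w ≠ z → w ≠ x → z < w :=
    fun w hw hwz _ => lt_of_le_of_ne (hminx w hw) (Ne.symm hwz)
  have hcondy : ∀ w ∈ Sy.support, w ≠ z → w ≠ y → z < w :=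
    fun w hw hwz _ => lt_of_le_of_ne (hminy w hw) (Ne.symm hwz)
  have hWAzx : WeaklyAccessible G L p z x := ⟨hzx', Sx, hSxp, by omega, hcondx⟩
  have hWAzy : WeaklyAccessible G L p z y := ⟨hzy', Sy, hSyp, by omega, hcondy⟩
  have hDa : DD G L p z x ≤ a := DD_le Sx hSxp (by omega) hcondx
  have hDb : DD G L p z y ≤ b := DD_le Sy hSyp (by omega) hcondy
  have ham : a ≤ m := by omega
  set j := s z with hj
  -- the x-side minimiser is z itself
  have hPhixle : Phi G L p m s x j ≤ DD G L p z x := by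
    rw [Phi]
    refine le_trans (Nat.sInf_le ⟨z, hWAzx, rfl, rfl⟩) (min_le_left _ _)
  have hPhixm : Phi G L p m s x j ≤ m := le_trans hPhixle (by omega)
  have hxmem : {e : ℕ | ∃ u, WeaklyAccessible G L p u x ∧ s u = j ∧
      e = min (DD G L p u x) (m + 1)}.Nonempty := ⟨_, z, hWAzx, rfl, rfl⟩
  obtain ⟨u₁, hu₁, hsu₁, hval₁⟩ := Nat.sInf_mem hxmem
  rw [← Phi] at hval₁
  have hDu₁ : DD G L p u₁ x = Phi G L p m s x j := by
    rw [hval₁]; rw [hval₁] at hPhixm; omega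
  have hu₁z : u₁ = z := by
    by_contra hne
    have hsum : DD G L p u₁ x + DD G L p z x ≤ p := by
      rw [hDu₁]; omega
    rcases lt_trichotomy u₁ z with hlt | heq | hlt
    · exact hs u₁ z (wa_join hlt hu₁ hWAzx hsum) (hsu₁.trans hj)
    · exact hne heq
    · exact hs z u₁ (wa_join hlt hWAzx hu₁ (by omega)) (hj ▸ hsu₁.symm ▸ rfl)
  have hdzx : DD G L p z x = Phi G L p m s x j := hu₁z ▸ hDu₁
  -- the y-side minimiser is z itself
  have hPj : Phi G L p m s y j = Phi G L p m s x j := by rw [hPhi]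
  have hymem : {e : ℕ | ∃ u, WeaklyAccessible G L p u y ∧ s u = j ∧
      e = min (DD G L p u y) (m + 1)}.Nonempty := ⟨_, z, hWAzy, rfl, rfl⟩
  obtain ⟨u₂, hu₂, hsu₂, hval₂⟩ := Nat.sInf_mem hymem
  rw [← Phi] at hval₂
  have hDu₂ : DD G L p u₂ y = Phi G L p m s x j := by
    rw [hPj] at hval₂
    rw [hval₂]; rw [hval₂] at hPhixm; omega
  have hu₂z : u₂ = z := by
    by_contra hne
    have hsum : DD G L p u₂ y + DD G L p z y ≤ p := by
      rw [hDu₂]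
      have : Phi G L p m s x j ≤ a := by rw [← hdzx]; exact hDa
      omega
    rcases lt_trichotomy u₂ z with hlt | heq | hlt
    · exact hs u₂ z (wa_join hlt hu₂ hWAzy hsum) (hsu₂.trans hj)
    · exact hne heq
    · exact hs z u₂ (wa_join hlt hWAzy hu₂ (by omega)) (hj ▸ hsu₂.symm ▸ rfl)
  have hdzy : DD G L p z y = Phi G L p m s x j := hu₂z ▸ hDu₂
  -- no short odd closed walks
  have hNoOdd : ∀ (u0 : V) (W : G.Walk u0 u0), W.length ≤ p → ¬ Odd W.length := by
    intro u0 W hle hodd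
    obtain ⟨u, C, hC, hCo, hClen⟩ := aux_exists_odd_cycle W.length W hodd le_rfl
    have := hgirth u C hC hCo
    omega
  -- parity contradiction
  obtain ⟨R1, hR1p, hR1le, hR1cond, hR1len⟩ := DD_mem hWAzx
  obtain ⟨R2, hR2p, hR2le, hR2cond, hR2len⟩ := DD_mem hWAzy
  have hpar1 : ¬ Odd (DD G L p z x + a) := by
    have hlen1 : (R1.append Sx.reverse).length = DD G L p z x + a := by
      rw [Walk.length_append, Walk.length_reverse, hR1len]
    intro hodd
    exact hNoOdd z (R1.append Sx.reverse) (by omega) (hlen1 ▸ hodd)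
  have hpar2 : ¬ Odd (DD G L p z y + b) := by
    have hlen2 : (R2.append Sy.reverse).length = DD G L p z y + b := by
      rw [Walk.length_append, Walk.length_reverse, hR2len]
    intro hodd
    exact hNoOdd z (R2.append Sy.reverse) (by omega) (hlen2 ▸ hodd)
  rw [Nat.not_odd_iff_even] at hpar1 hpar2
  obtain ⟨k1, hk1⟩ := hpar1
  obtain ⟨k2, hk2⟩ := hpar2
  omega

end KeyLemmas


/-- Theorem 4: for a class `K = (𝒦 i)` of finite graphs with bounded expansion, witnessed by
constants `c k` bounding all weak `k`-colouring numbers, and any odd positive `p`, every graph in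
the class with odd girth at least `p+1` satisfies `χ(G^[♯p]) ≤ (⌊p/2⌋+2) ^ (c p)`; in particular
the chromatic number of exact `p`-power graphs is bounded by a constant on the class. -/
theorem chromaticNumber_exactPowerGraph_le_of_boundedExpansion
    {ι : Type*} {Vert : ι → Type*} [∀ i, Fintype (Vert i)]
    (𝒦 : ∀ i, SimpleGraph (Vert i)) (c : ℕ → ℕ)
    (hbe : ∀ i, ∀ k : ℕ, 1 ≤ k → wcol (𝒦 i) k ≤ c k)
    (p : ℕ) (hp : Odd p) (i : ι) (hgirth : OddGirthAtLeast (𝒦 i) (p + 1)) :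
    (exactPowerGraph (𝒦 i) p).chromaticNumber ≤ (((p / 2 + 2) ^ (c p) : ℕ) : ℕ∞) := by
  classical
  set G := 𝒦 i with hG
  obtain ⟨m, hpm⟩ : ∃ m, p = 2 * m + 1 := by
    obtain ⟨m, hm⟩ := hp; exact ⟨m, by omega⟩
  have hp1 : 1 ≤ p := by omega
  -- obtain an optimal linear order
  have hSne : { m₀ : ℕ | ∃ L : LinearOrder (Vert i), ∀ y : Vert i,
      {x : Vert i | WeaklyAccessible G L p x y}.ncard ≤ m₀ }.Nonempty := by
    refine ⟨Fintype.card (Vert i),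
      LinearOrder.lift' (Fintype.equivFin (Vert i)) (Equiv.injective _), fun y => ?_⟩
    calc {x : Vert i | WeaklyAccessible _ _ p x y}.ncard ≤ (Set.univ : Set (Vert i)).ncard :=
        Set.ncard_le_ncard (Set.subset_univ _) Set.finite_univ
    _ = Fintype.card (Vert i) := by rw [Set.ncard_univ, Nat.card_eq_fintype_card]
  obtain ⟨L, hL⟩ := Nat.sInf_mem hSne
  have hwcol : wcol G p ≤ c p := hbe i p hp1
  rw [wcol] at hwcol
  set t := c p with ht
  have hQ : ∀ y : Vert i, {x : Vert i | WeaklyAccessible G L p x y}.ncard ≤ t - 1 :=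
    fun y => le_trans (hL y) (by omega)
  have ht1 : 1 ≤ t := by omega
  letI := L
  -- greedy colouring of the accessibility graph
  obtain ⟨s, hs⟩ := aux_greedy (fun u v => WeaklyAccessible G L p u v)
    (fun u v h => h.1) hQ ht1
  -- the colouring
  have hproper : ∀ x y : Vert i, (exactPowerGraph G p).Adj x y →
      Phi G L p m s x ≠ Phi G L p m s y := by
    rintro x y ⟨hxy, P, hPp, hPlen⟩
    have hFne : P.support.toFinset.Nonempty := ⟨x, List.mem_toFinset.mpr P.start_mem_support⟩
    obtain ⟨z, hzmem, hmin⟩ : ∃ z, z ∈ P.support ∧ ∀ w ∈ P.support, L.le z w :=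
      ⟨P.support.toFinset.min' hFne,
        List.mem_toFinset.mp (P.support.toFinset.min'_mem hFne),
        fun w hw => P.support.toFinset.min'_le w (List.mem_toFinset.mpr hw)⟩
    by_cases hzx : z = x
    · exact Phi_ne_end hs P hPp hPlen (hzx ▸ hmin) hxy
    by_cases hzy : z = y
    · intro hPhi
      refine Phi_ne_end hs P.reverse hPp.reverse (by simpa using hPlen)
        (fun w hw => ?_) (Ne.symm hxy) hPhi.symm
      refine hzy ▸ hmin w ?_
      rwa [Walk.support_reverse, List.mem_reverse] at hw
    · -- interior minimum
      have hlensum : (P.takeUntil z hzmem).length + (P.dropUntil z hzmem).length = p := by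
        have := congrArg Walk.length (P.take_spec hzmem)
        rw [Walk.length_append] at this
        omega
      have hTxp : (P.takeUntil z hzmem).IsPath := hPp.takeUntil hzmem
      have hTyp : (P.dropUntil z hzmem).IsPath := hPp.dropUntil hzmem
      have hminx : ∀ w ∈ (P.takeUntil z hzmem).reverse.support, L.le z w := by
        intro w hw
        rw [Walk.support_reverse, List.mem_reverse] at hw
        exact hmin w (P.support_takeUntil_subset hzmem hw)
      have hminy : ∀ w ∈ (P.dropUntil z hzmem).support, L.le z w :=
        fun w hw => hmin w (P.support_dropUntil_subset hzmem hw)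
      have hlx : (P.takeUntil z hzmem).reverse.length = (P.takeUntil z hzmem).length :=
        Walk.length_reverse _
      have hne_ab : (P.takeUntil z hzmem).length ≠ (P.dropUntil z hzmem).length := by omega
      rcases lt_or_gt_of_ne hne_ab with hlt | hgt
      · exact Phi_ne_mid hgirth hpm hs (P.takeUntil z hzmem).reverse (P.dropUntil z hzmem)
          hTxp.reverse hTyp hminx hminy hzx hzy (by omega) (by omega)
      · intro hPhi
        exact Phi_ne_mid hgirth hpm hs (P.dropUntil z hzmem) (P.takeUntil z hzmem).reverse
          hTyp hTxp.reverse hminy hminx hzy hzx (by omega) (by omega) hPhi.symm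
  -- build the colouring
  have hcolor : (exactPowerGraph G p).Colorable ((m + 2) ^ t) := by
    have C : (exactPowerGraph G p).Coloring (Fin t → Fin (m + 2)) := by
      refine Coloring.mk (fun v j => ⟨Phi G L p m s v j, Phi_lt m s v j⟩) ?_
      intro v w hadj heq
      refine hproper v w hadj (funext fun j => ?_)
      have := congrFun heq j
      exact congrArg Fin.val this
    have := C.colorable
    rwa [show Fintype.card (Fin t → Fin (m + 2)) = (m + 2) ^ t by
      simp [Fintype.card_fun]] at this
  have hfin := hcolor.chromaticNumber_le
  have hm2 : p / 2 + 2 = m + 2 := by omega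
  rw [hm2]
  exact_mod_cast hfin
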